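/- Let c ∈ ℂ, r > 0, and let f : ℂ → ℂ be complex-differentiable on an open set containing the closed disk {z : |z - c| ≤ r}. Let x_0, …, x_n be distinct points in the open disk {z : |z - c| < r}, let z_1, …, z_m ∈ ℂ with z_j ∉ {x_0, …, x_n} for all j, and define the discrete signed logarithmic potential U(z) = (1/(n+1))·(∑_{i=0}^n log(1/|z - x_i|) - ∑_{j=1}^m log(1/|z - z_j|)) for z ∉ {x_0, …, x_n} ∪ {z_1, …, z_m}. Let r(x) = ∑_{i=0}^n f(x_i)·(q(x_i)/q(x))·∏_{j≠i} (x - x_j)/(x_i - x_j) with q(s) = ∏_{j=1}^m (s - z_j). Then for every x in the open disk {z : |z - c| < r} with x ∉ {x_0, …, x_n} and q(x) ≠ 0, |f(x) - r(x)| ≤ (r/(2π))·(∫_0^{2π} |f(c + re^{iθ})|/|c + re^{iθ} - x| dθ)·(exp(sup_{θ∈[0,2π]} U(c + re^{iθ}) - U(x)))^{n+1}. -/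

import Mathlib

open Finset

lemma lag_pf {N : ℕ} (hN : 0 < N) (p : Fin N → ℂ) (hp : Function.Injective p) (t : ℂ) :
    ∑ k, ∏ j ∈ univ.erase k, ((p k - p j)⁻¹ * (t - p j)) = 1 := by
  have h := Lagrange.sum_basis (v := p) (s := univ) hp.injOn ⟨⟨0, hN⟩, mem_univ _⟩
  have := congrArg (Polynomial.eval t) h
  simpa [Lagrange.basis, Lagrange.basisDivisor, Polynomial.eval_prod,
    Polynomial.eval_finset_sum] using this

lemma erase_zero_eq {n : ℕ} : (univ : Finset (Fin (n+1))).erase 0 = univ.image Fin.succ := by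
  ext j
  cases j using Fin.cases <;> simp [Fin.succ_ne_zero, (Fin.succ_injective _).eq_iff, eq_comm]

lemma erase_succ_eq {n : ℕ} (i : Fin n) :
    (univ : Finset (Fin (n+1))).erase i.succ = insert 0 ((univ.erase i).image Fin.succ) := by
  ext j
  cases j using Fin.cases <;>
    simp [Fin.succ_ne_zero, (Fin.succ_injective _).eq_iff, eq_comm, Ne, (Fin.succ_ne_zero _).symm]

lemma lag_pf' {n : ℕ} (x : Fin (n+1) → ℂ) (hx : Function.Injective x)
    (X : ℂ) (hX : ∀ i, X ≠ x i) (t : ℂ) :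
    (∏ i, ((X - x i)⁻¹ * (t - x i))) +
      ∑ i, (((x i - X)⁻¹ * (t - X)) * ∏ j ∈ univ.erase i, ((x i - x j)⁻¹ * (t - x j))) = 1 := by
  have hp : Function.Injective (Fin.cons X x : Fin (n+2) → ℂ) :=
    Fin.cons_injective_of_injective (by rintro ⟨i, rfl⟩; exact hX i rfl) hx
  have h := lag_pf (N := n+2) (Nat.succ_pos _) (Fin.cons X x) hp t
  rw [Fin.sum_univ_succ] at h
  rw [erase_zero_eq, prod_image (fun a _ b _ h => Fin.succ_injective _ h)] at h
  simp only [Fin.cons_zero, Fin.cons_succ] at h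
  have key : ∀ i : Fin (n+1),
      (∏ j ∈ univ.erase i.succ,
        ((x i - (Fin.cons X x : Fin (n+2) → ℂ) j)⁻¹ *
          (t - (Fin.cons X x : Fin (n+2) → ℂ) j)) : ℂ) =
      ((x i - X)⁻¹ * (t - X)) * ∏ j ∈ univ.erase i, ((x i - x j)⁻¹ * (t - x j)) := by
    intro i
    rw [erase_succ_eq, prod_insert (by simp [Fin.succ_ne_zero]),
      prod_image (fun a _ b _ h => Fin.succ_injective _ h)]
    simp [Fin.cons_zero, Fin.cons_succ]
  rw [Finset.sum_congr rfl (fun i _ => key i)] at h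
  exact h

lemma partial_fraction {n : ℕ} (x : Fin (n+1) → ℂ) (hx : Function.Injective x)
    (X : ℂ) (hX : ∀ i, X ≠ x i) (t : ℂ) (ht : t ≠ X) (htn : ∀ i, t ≠ x i) :
    ((t - X) * ∏ i, (t - x i))⁻¹ =
      (∏ i, (X - x i))⁻¹ * (t - X)⁻¹ +
      ∑ i, ((x i - X) * ∏ j ∈ univ.erase i, (x i - x j))⁻¹ * (t - x i)⁻¹ := by
  have htX : t - X ≠ 0 := sub_ne_zero.2 ht
  have hti : ∀ i, t - x i ≠ 0 := fun i => sub_ne_zero.2 (htn i)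
  have hXi : ∀ i, X - x i ≠ 0 := fun i => sub_ne_zero.2 (hX i)
  have hxiX : ∀ i, x i - X ≠ 0 := fun i => sub_ne_zero.2 fun h => (hX i) h.symm
  have hdij : ∀ i, ∀ j ∈ univ.erase i, x i - x j ≠ 0 := fun i j hj =>
    sub_ne_zero.2 fun h => (mem_erase.1 hj).1 (hx h).symm
  have hd : ∀ i, (∏ j ∈ univ.erase i, (x i - x j)) ≠ 0 := fun i => prod_ne_zero_iff.2 (hdij i)
  have hW : (∏ i, (t - x i)) ≠ 0 := prod_ne_zero_iff.2 fun i _ => hti i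
  have h := lag_pf' x hx X hX t
  calc ((t - X) * ∏ i, (t - x i))⁻¹
      = ((t - X) * ∏ i, (t - x i))⁻¹ * ((∏ i, ((X - x i)⁻¹ * (t - x i))) +
        ∑ i, (((x i - X)⁻¹ * (t - X)) * ∏ j ∈ univ.erase i, ((x i - x j)⁻¹ * (t - x j)))) := by
        rw [h, mul_one]
    _ = (∏ i, (X - x i))⁻¹ * (t - X)⁻¹ +
      ∑ i, ((x i - X) * ∏ j ∈ univ.erase i, (x i - x j))⁻¹ * (t - x i)⁻¹ := by
        rw [mul_add, mul_sum]
        congr 1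
        · have hPX : (∏ i, (X - x i)) ≠ 0 := prod_ne_zero_iff.2 fun i _ => hXi i
          rw [prod_mul_distrib, Finset.prod_inv_distrib]
          field_simp
        · refine Finset.sum_congr rfl fun i _ => ?_
          have hWi : (∏ j, (t - x j)) = (t - x i) * ∏ j ∈ univ.erase i, (t - x j) :=
            (Finset.mul_prod_erase _ _ (mem_univ i)).symm
          have hPi : (∏ j ∈ univ.erase i, (t - x j)) ≠ 0 :=
            prod_ne_zero_iff.2 fun j _ => hti j
          rw [hWi, prod_mul_distrib, Finset.prod_inv_distrib]
          field_simp

lemma circleIntegral_add {f g : ℂ → ℂ} {c : ℂ} {R : ℝ} (hf : CircleIntegrable f c R)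
    (hg : CircleIntegrable g c R) :
    (∮ z in C(c, R), (f z + g z)) = (∮ z in C(c, R), f z) + ∮ z in C(c, R), g z := by
  simp only [circleIntegral, smul_add]
  exact intervalIntegral.integral_add hf.out hg.out

lemma circleIntegral_finset_sum {ι : Type*} (s : Finset ι) (F : ι → ℂ → ℂ) {c : ℂ} {R : ℝ}
    (h : ∀ i ∈ s, CircleIntegrable (F i) c R) :
    (∮ z in C(c, R), ∑ i ∈ s, F i z) = ∑ i ∈ s, ∮ z in C(c, R), F i z := by
  simp only [circleIntegral, smul_sum]
  exact intervalIntegral.integral_finset_sum fun i hi => (h i hi).out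

/-- Potential-form error bound (2d) for rational interpolation with prescribed poles,
with the contour taken to be a circle of center `c` and radius `r`; `Upot` is the
discrete signed logarithmic potential of the nodes and poles. -/
theorem rational_interpolation_potential_bound (c : ℂ) (r : ℝ) (hr : 0 < r) (f : ℂ → ℂ)
    (U : Set ℂ) (hUopen : IsOpen U) (hUsub : Metric.closedBall c r ⊆ U)
    (hf : DifferentiableOn ℂ f U)
    (n : ℕ) (x : Fin (n + 1) → ℂ) (hx : Function.Injective x)
    (hxball : ∀ i, x i ∈ Metric.ball c r)
    (m : ℕ) (z : Fin m → ℂ) (hz : ∀ j i, z j ≠ x i)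
    (Upot : ℂ → ℝ)
    (hUpot : ∀ s, Upot s = (1 / (n + 1)) *
      (∑ i, Real.log (1 / ‖s - x i‖) - ∑ j, Real.log (1 / ‖s - z j‖)))
    (q R : ℂ → ℂ)
    (hq : ∀ s, q s = ∏ j, (s - z j))
    (hR : ∀ X, R X = ∑ i, f (x i) * (q (x i) / q X) *
      ∏ j ∈ univ.erase i, (X - x j) / (x i - x j))
    (X : ℂ) (hX : X ∈ Metric.ball c r) (hXnode : ∀ i, X ≠ x i) (hqX : q X ≠ 0) :
    ‖f X - R X‖ ≤ (r / (2 * Real.pi)) *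
      (∫ θ in (0:ℝ)..(2 * Real.pi),
        ‖f (c + (r : ℂ) * Complex.exp ((θ : ℂ) * Complex.I))‖ /
          ‖c + (r : ℂ) * Complex.exp ((θ : ℂ) * Complex.I) - X‖) *
      (Real.exp ((⨆ θ : Set.Icc (0:ℝ) (2 * Real.pi),
          Upot (c + (r : ℂ) * Complex.exp (((θ : ℝ) : ℂ) * Complex.I))) - Upot X)) ^ (n + 1) := by
  have hπ := Real.pi_pos
  set W : ℂ → ℂ := fun s => ∏ i, (s - x i) with hWdef
  set F : ℂ → ℂ := fun s => f s * q s with hFdef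
  have hcm : ∀ θ : ℝ, circleMap c r θ = c + (r : ℂ) * Complex.exp ((θ : ℂ) * Complex.I) :=
    fun θ => rfl
  have hsphX : ∀ ζ ∈ Metric.sphere c r, ζ ≠ X := by
    intro ζ hζ h
    rw [Metric.mem_sphere] at hζ
    rw [h] at hζ
    exact absurd hζ (ne_of_lt (Metric.mem_ball.1 hX))
  have hsphx : ∀ ζ ∈ Metric.sphere c r, ∀ i, ζ ≠ x i := by
    intro ζ hζ i h
    rw [Metric.mem_sphere] at hζ
    rw [h] at hζ
    exact absurd hζ (ne_of_lt (Metric.mem_ball.1 (hxball i)))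
  have hsphU : Metric.sphere c r ⊆ U := fun ζ hζ =>
    hUsub (Metric.sphere_subset_closedBall hζ)
  have hWX : W X ≠ 0 := prod_ne_zero_iff.2 fun i _ => sub_ne_zero.2 (hXnode i)
  have hd : ∀ i, (∏ j ∈ univ.erase i, (x i - x j)) ≠ 0 := fun i => prod_ne_zero_iff.2
    fun j hj => sub_ne_zero.2 fun h => (mem_erase.1 hj).1 (hx h).symm
  have hxiX : ∀ i, x i - X ≠ 0 := fun i => sub_ne_zero.2 fun h => (hXnode i) h.symm
  have hWsph : ∀ ζ ∈ Metric.sphere c r, W ζ ≠ 0 := fun ζ hζ =>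
    prod_ne_zero_iff.2 fun i _ => sub_ne_zero.2 (hsphx ζ hζ i)
  have hqd : Differentiable ℂ q := by
    rw [funext hq]
    fun_prop
  have hFd : DifferentiableOn ℂ F (Metric.closedBall c r) :=
    (hf.mono hUsub).mul hqd.differentiableOn
  have hFcont : ContinuousOn F (Metric.sphere c r) :=
    ((hf.continuousOn.mono hsphU).mul hqd.continuous.continuousOn)
  have cauchy : ∀ w ∈ Metric.ball c r,
      (∮ ζ in C(c, r), (ζ - w)⁻¹ * F ζ) = (2 * Real.pi * Complex.I) * F w := by
    intro w hw
    simpa [smul_eq_mul] using hFd.circleIntegral_sub_inv_smul hw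
  have hcont : ∀ w ∈ Metric.ball c r,
      ContinuousOn (fun ζ => (ζ - w)⁻¹ * F ζ) (Metric.sphere c r) := by
    intro w hw
    refine ContinuousOn.mul (ContinuousOn.inv₀ (continuousOn_id.sub continuousOn_const) ?_) hFcont
    intro ζ hζ
    refine sub_ne_zero.2 fun h => ?_
    rw [Metric.mem_sphere] at hζ
    rw [h] at hζ
    exact absurd hζ (ne_of_lt (Metric.mem_ball.1 hw))
  set coef : Fin (n+1) → ℂ := fun i => ((x i - X) * ∏ j ∈ univ.erase i, (x i - x j))⁻¹
    with hcoef
  have eqOn : Set.EqOn (fun ζ => F ζ / ((ζ - X) * W ζ))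
      (fun ζ => (W X)⁻¹ * ((ζ - X)⁻¹ * F ζ) + ∑ i, coef i * ((ζ - x i)⁻¹ * F ζ))
      (Metric.sphere c r) := by
    intro ζ hζ
    have hpf := partial_fraction x hx X hXnode ζ (hsphX ζ hζ) (hsphx ζ hζ)
    simp only [div_eq_mul_inv]
    rw [hpf, mul_add, Finset.mul_sum]
    congr 1
    · ring
    · exact Finset.sum_congr rfl fun i _ => by ring
  have key : (∮ ζ in C(c, r), F ζ / ((ζ - X) * W ζ)) =
      (2 * Real.pi * Complex.I) * ((W X)⁻¹ * F X + ∑ i, coef i * F (x i)) := by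
    rw [circleIntegral.integral_congr hr.le eqOn]
    rw [circleIntegral_add (f := fun ζ => (W X)⁻¹ * ((ζ - X)⁻¹ * F ζ))
      (g := fun ζ => ∑ i, coef i * ((ζ - x i)⁻¹ * F ζ))
      ((continuousOn_const.mul (hcont X hX)).circleIntegrable hr.le)
      (((continuousOn_finset_sum univ (fun i _ =>
        continuousOn_const.mul (hcont (x i) (hxball i))))).circleIntegrable hr.le)]
    rw [circleIntegral_finset_sum univ (fun i ζ => coef i * ((ζ - x i)⁻¹ * F ζ))
      (fun i _ => (continuousOn_const.mul (hcont (x i) (hxball i))).circleIntegrable hr.le)]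
    rw [circleIntegral.integral_const_mul, cauchy X hX]
    have : ∀ i : Fin (n+1), (∮ ζ in C(c, r), coef i * ((ζ - x i)⁻¹ * F ζ)) =
        coef i * ((2 * Real.pi * Complex.I) * F (x i)) := by
      intro i
      rw [circleIntegral.integral_const_mul, cauchy (x i) (hxball i)]
    rw [Finset.sum_congr rfl fun i _ => this i, mul_add, Finset.mul_sum]
    congr 1
    · ring
    · exact Finset.sum_congr rfl fun i _ => by ring
  have alg : f X - R X = (W X / q X) * ((W X)⁻¹ * F X + ∑ i, coef i * F (x i)) := by
    have e0 : (W X / q X) * ((W X)⁻¹ * F X) = f X := by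
      simp only [hFdef]
      field_simp
    have ei : ∀ i, (W X / q X) * (coef i * F (x i)) =
        -(f (x i) * (q (x i) / q X) * ∏ j ∈ univ.erase i, (X - x j) / (x i - x j)) := by
      intro i
      have hWXi : W X = (X - x i) * ∏ j ∈ univ.erase i, (X - x j) :=
        (Finset.mul_prod_erase _ _ (mem_univ i)).symm
      have hprod : (∏ j ∈ univ.erase i, (X - x j) / (x i - x j)) =
          (∏ j ∈ univ.erase i, (X - x j)) * (∏ j ∈ univ.erase i, (x i - x j))⁻¹ := by
        rw [← Finset.prod_inv_distrib, ← prod_mul_distrib]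
        exact Finset.prod_congr rfl fun j _ => div_eq_mul_inv _ _
      simp only [hcoef, hFdef]
      rw [hWXi, hprod, mul_inv]
      linear_combination (-(f (x i) * q (x i) * (q X)⁻¹ * (∏ j ∈ univ.erase i, (X - x j)) *
        (∏ j ∈ univ.erase i, (x i - x j))⁻¹)) * mul_inv_cancel₀ (hxiX i)
    rw [hR, mul_add, Finset.mul_sum, e0,
      Finset.sum_congr rfl fun i _ => ei i, Finset.sum_neg_distrib]
    ring
  have h2πI : (2 * (Real.pi:ℂ) * Complex.I) ≠ 0 := by
    simp [Complex.I_ne_zero, Real.pi_ne_zero, Complex.ofReal_ne_zero]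
  have final_eq : f X - R X = (W X / q X) * (2 * Real.pi * Complex.I)⁻¹ *
      (∮ ζ in C(c, r), F ζ / ((ζ - X) * W ζ)) := by
    rw [key, alg]
    field_simp
  have habs : ‖f X - R X‖ =
      ‖W X‖ / ‖q X‖ * (2 * Real.pi)⁻¹ *
      ‖∮ ζ in C(c, r), F ζ / ((ζ - X) * W ζ)‖ := by
    rw [final_eq, norm_mul, norm_mul, norm_div, norm_inv]
    congr 2
    simp [norm_mul, Complex.norm_I, Complex.norm_real, abs_of_pos hπ, Complex.norm_two]
  -- the supremum of the potential on the circle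
  set S : ℝ := ⨆ θ : Set.Icc (0:ℝ) (2 * Real.pi),
      Upot (c + (r : ℂ) * Complex.exp (((θ : ℝ) : ℂ) * Complex.I)) with hSdef
  have hn1 : (0:ℝ) < (n:ℝ) + 1 := by positivity
  -- Upot is bounded above on the sphere
  set M : ℝ := (1 / ((n:ℝ) + 1)) *
      ((∑ i, -Real.log (r - dist (x i) c)) + ∑ j, (r + dist c (z j))) with hMdef
  have hUb : ∀ s ∈ Metric.sphere c r, Upot s ≤ M := by
    intro s hs
    rw [Metric.mem_sphere] at hs
    rw [hUpot s, hMdef]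
    refine mul_le_mul_of_nonneg_left ?_ (by positivity)
    rw [sub_eq_add_neg, ← Finset.sum_neg_distrib]
    refine add_le_add (Finset.sum_le_sum fun i _ => ?_) (Finset.sum_le_sum fun j _ => ?_)
    · have h1 : 0 < r - dist (x i) c := by
        have := Metric.mem_ball.1 (hxball i)
        linarith
      have h2 : r - dist (x i) c ≤ ‖s - x i‖ := by
        rw [← Complex.dist_eq]
        have := dist_triangle s (x i) c
        have hxc : dist (x i) c = dist (x i) c := rfl
        linarith [dist_comm s (x i) ▸ this]
      rw [one_div, Real.log_inv]
      exact neg_le_neg (Real.log_le_log h1 h2)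
    · rw [one_div, Real.log_inv, neg_neg]
      calc Real.log (‖s - z j‖) ≤ ‖s - z j‖ :=
            Real.log_le_self (norm_nonneg _)
        _ = dist s (z j) := (Complex.dist_eq _ _).symm
        _ ≤ dist s c + dist c (z j) := dist_triangle _ _ _
        _ = r + dist c (z j) := by rw [hs]
  have hbdd : BddAbove (Set.range fun θ : Set.Icc (0:ℝ) (2 * Real.pi) =>
      Upot (c + (r : ℂ) * Complex.exp (((θ : ℝ) : ℂ) * Complex.I))) := by
    refine ⟨M, ?_⟩
    rintro _ ⟨θ, rfl⟩
    exact hUb _ (by rw [← hcm]; exact circleMap_mem_sphere c hr.le θ)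
  have hle_S : ∀ θ : ℝ, θ ∈ Set.Icc (0:ℝ) (2 * Real.pi) → Upot (circleMap c r θ) ≤ S := by
    intro θ hθ
    rw [hcm, hSdef]
    exact le_ciSup hbdd ⟨θ, hθ⟩
  -- pointwise potential estimate on the sphere
  have hexpA : ∀ s : ℂ, (∀ i, s ≠ x i) →
      Real.exp (∑ i, Real.log (1 / ‖s - x i‖)) = (‖W s‖)⁻¹ := by
    intro s hs
    rw [Real.exp_sum, hWdef]
    simp only
    rw [norm_prod, ← Finset.prod_inv_distrib]
    refine Finset.prod_congr rfl fun i _ => ?_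
    have : 0 < ‖s - x i‖ := norm_pos_iff.2 (sub_ne_zero.2 (hs i))
    rw [one_div, Real.exp_log (inv_pos.2 this)]
  have hkey2 : ∀ ζ ∈ Metric.sphere c r,
      ‖q ζ‖ ≤ Real.exp (((n:ℝ) + 1) * Upot ζ) * ‖W ζ‖ := by
    intro ζ hζ
    have hB1 : ‖q ζ‖ *
        Real.exp (∑ j, Real.log (1 / ‖ζ - z j‖)) ≤ 1 := by
      rw [hq ζ, norm_prod, Real.exp_sum, ← Finset.prod_mul_distrib]
      refine Finset.prod_le_one (fun j _ => by positivity) (fun j _ => ?_)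
      rcases eq_or_ne (‖ζ - z j‖) 0 with h | h
      · simp [h]
      · have hpos : 0 < ‖ζ - z j‖ := (norm_nonneg _).lt_of_ne (Ne.symm h)
        rw [one_div, Real.exp_log (inv_pos.2 hpos), mul_inv_cancel₀ h]
    have hmul : ((n:ℝ) + 1) * Upot ζ =
        (∑ i, Real.log (1 / ‖ζ - x i‖)) -
        ∑ j, Real.log (1 / ‖ζ - z j‖) := by
      rw [hUpot ζ]
      field_simp
    rw [hmul, Real.exp_sub, hexpA ζ (hsphx ζ hζ)]
    have hWpos : 0 < ‖W ζ‖ := norm_pos_iff.2 (hWsph ζ hζ)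
    have hEB : 0 < Real.exp (∑ j, Real.log (1 / ‖ζ - z j‖)) := Real.exp_pos _
    have heq : (‖W ζ‖)⁻¹ /
        Real.exp (∑ j, Real.log (1 / ‖ζ - z j‖)) * ‖W ζ‖ =
        1 / Real.exp (∑ j, Real.log (1 / ‖ζ - z j‖)) := by
      field_simp
    rw [heq, le_div_iff₀ hEB]
    exact hB1
  -- the exact value at X
  have hXeq : Real.exp (-(((n:ℝ) + 1) * Upot X)) =
      ‖W X‖ / ‖q X‖ := by
    have hXz : ∀ j, X - z j ≠ 0 := by
      intro j
      have := hqX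
      rw [hq X] at this
      exact prod_ne_zero_iff.1 this j (mem_univ j)
    have hmulX : ((n:ℝ) + 1) * Upot X =
        (∑ i, Real.log (1 / ‖X - x i‖)) -
        ∑ j, Real.log (1 / ‖X - z j‖) := by
      rw [hUpot X]
      field_simp
    have hexpB : Real.exp (∑ j, Real.log (1 / ‖X - z j‖)) =
        (‖q X‖)⁻¹ := by
      rw [Real.exp_sum, hq X, norm_prod, ← Finset.prod_inv_distrib]
      refine Finset.prod_congr rfl fun j _ => ?_
      have : 0 < ‖X - z j‖ := norm_pos_iff.2 (hXz j)
      rw [one_div, Real.exp_log (inv_pos.2 this)]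
    rw [hmulX, neg_sub, Real.exp_sub, hexpB, hexpA X hXnode]
    have hWpos : 0 < ‖W X‖ := norm_pos_iff.2 hWX
    have hqpos : 0 < ‖q X‖ := norm_pos_iff.2 hqX
    field_simp
  -- the integral of |f|/|ζ - X|
  set I0 : ℝ := ∫ θ in (0:ℝ)..(2 * Real.pi),
      ‖f (c + (r : ℂ) * Complex.exp ((θ : ℂ) * Complex.I))‖ /
        ‖c + (r : ℂ) * Complex.exp ((θ : ℂ) * Complex.I) - X‖ with hI0def
  have hI0cm : I0 = ∫ θ in (0:ℝ)..(2 * Real.pi),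
      ‖f (circleMap c r θ)‖ / ‖circleMap c r θ - X‖ := rfl
  have hfc : Continuous fun θ : ℝ => f (circleMap c r θ) :=
    hf.continuousOn.comp_continuous (continuous_circleMap c r)
      (fun θ => hsphU (circleMap_mem_sphere c hr.le θ))
  have hgc : Continuous fun θ : ℝ =>
      ‖f (circleMap c r θ)‖ / ‖circleMap c r θ - X‖ := by
    refine (continuous_norm.comp hfc).div
      (continuous_norm.comp ((continuous_circleMap c r).sub continuous_const)) ?_
    intro θ
    exact ne_of_gt (norm_pos_iff.2
      (sub_ne_zero.2 (hsphX _ (circleMap_mem_sphere c hr.le θ))))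
  set C1 : ℝ := r * Real.exp (((n:ℝ) + 1) * S) with hC1def
  have hIbound : ‖∮ ζ in C(c, r), F ζ / ((ζ - X) * W ζ)‖ ≤ C1 * I0 := by
    have hb : ‖∮ ζ in C(c, r), F ζ / ((ζ - X) * W ζ)‖ ≤
        |∫ θ in (0:ℝ)..(2 * Real.pi), C1 *
          (‖f (circleMap c r θ)‖ / ‖circleMap c r θ - X‖)| := by
      refine (intervalIntegral.norm_integral_le_of_norm_le Real.two_pi_pos.le
        (g := fun θ => C1 * (‖f (circleMap c r θ)‖ / ‖circleMap c r θ - X‖)) ?_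
        ((continuous_const.mul hgc).intervalIntegrable _ _)).trans (le_abs_self _)
      filter_upwards with θ hθ
      have hθ' : θ ∈ Set.Icc (0:ℝ) (2 * Real.pi) := by
        exact ⟨hθ.1.le, hθ.2⟩
      set ζ := circleMap c r θ with hζdef
      have hζs : ζ ∈ Metric.sphere c r := circleMap_mem_sphere c hr.le θ
      have haX : 0 < ‖ζ - X‖ :=
        norm_pos_iff.2 (sub_ne_zero.2 (hsphX ζ hζs))
      have haW : 0 < ‖W ζ‖ := norm_pos_iff.2 (hWsph ζ hζs)
      have h5 : ‖q ζ‖ ≤ Real.exp (((n:ℝ) + 1) * S) * ‖W ζ‖ :=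
        (hkey2 ζ hζs).trans (mul_le_mul_of_nonneg_right
          (Real.exp_le_exp.2 (mul_le_mul_of_nonneg_left (hle_S θ hθ') hn1.le)) haW.le)
      rw [norm_smul, deriv_circleMap]
      rw [norm_mul, norm_circleMap_zero, Complex.norm_I, mul_one, abs_of_pos hr]
      simp only [hFdef]
      rw [norm_div, norm_mul, norm_mul]
      calc r * (‖f ζ‖ * ‖q ζ‖ /
            (‖ζ - X‖ * ‖W ζ‖))
          = (r * (‖f ζ‖ / ‖ζ - X‖)) *
            (‖q ζ‖ / ‖W ζ‖) := by
            field_simp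
        _ ≤ (r * (‖f ζ‖ / ‖ζ - X‖)) *
            Real.exp (((n:ℝ) + 1) * S) := by
            refine mul_le_mul_of_nonneg_left ?_ (by positivity)
            rw [div_le_iff₀ haW]
            exact h5
        _ = C1 * (‖f ζ‖ / ‖ζ - X‖) := by rw [hC1def]; ring
    refine hb.trans ?_
    rw [intervalIntegral.integral_const_mul, ← hI0cm, abs_of_nonneg]
    have hI0nn : 0 ≤ I0 := by
      rw [hI0cm]
      exact intervalIntegral.integral_nonneg Real.two_pi_pos.le fun θ _ => by positivity
    positivity
  have hE : (Real.exp (S - Upot X)) ^ (n + 1) =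
      Real.exp (((n:ℝ) + 1) * S) * (‖W X‖ / ‖q X‖) := by
    rw [← Real.exp_nat_mul, ← hXeq, ← Real.exp_add]
    congr 1
    push_cast
    ring
  have hI0nn : 0 ≤ I0 := by
    rw [hI0cm]
    exact intervalIntegral.integral_nonneg Real.two_pi_pos.le fun θ _ => by positivity
  calc ‖f X - R X‖
      = ‖W X‖ / ‖q X‖ * (2 * Real.pi)⁻¹ *
        ‖∮ ζ in C(c, r), F ζ / ((ζ - X) * W ζ)‖ := habs
    _ ≤ ‖W X‖ / ‖q X‖ * (2 * Real.pi)⁻¹ * (C1 * I0) := by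
        refine mul_le_mul_of_nonneg_left hIbound ?_
        positivity
    _ = (r / (2 * Real.pi)) * I0 * (Real.exp (S - Upot X)) ^ (n + 1) := by
        rw [hE, hC1def]
        ring
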